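/- For any k ≥ 1 and any N̄ > k, there exist L = L(N̄, k) > 0 and δ = δ(N̄, k) > 0 such that the following holds. If {v_1, …, v_k} and {w_1, …, w_k} are two sets of k linearly independent unit vectors in a Banach space B for which max_{i ≤ k} |v_i − w_i| ≤ δ and N[v_1, …, v_k] ≤ N̄ and N[w_1, …, w_k] ≤ N̄, then | log ( m_{⟨v_1,…,v_k⟩} P[v_1, …, v_k] / m_{⟨w_1,…,w_k⟩} P[w_1, …, w_k] ) | ≤ L Σ_{i=1}^k |v_i − w_i|. -/

import Mathlib

open MeasureTheory Filter Metric Module Submodule Set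

noncomputable section

namespace BY

variable {B B' : Type*}

/-- The unit sphere of a subspace `E`. -/
def subSphere [NormedAddCommGroup B] [NormedSpace ℝ B] (E : Submodule ℝ B) : Set B :=
  {v : B | v ∈ E ∧ ‖v‖ = 1}

/-- `d_H(E, E')`: the Hausdorff distance between the unit spheres of `E` and `E'`. -/
def dH [NormedAddCommGroup B] [NormedSpace ℝ B] (E E' : Submodule ℝ B) : ℝ :=
  Metric.hausdorffDist (subSphere E) (subSphere E')

/-- The supremum of `‖π x‖` over `x ∈ S`, where `π` is the projection onto `E` along `F`. -/
def projNormOn [NormedAddCommGroup B] [NormedSpace ℝ B] (E F : Submodule ℝ B)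
    (h : IsCompl E F) (S : Set B) : ℝ :=
  sSup ((fun x => ‖(E.linearProjOfIsCompl F h x : B)‖) '' S)

/-- `|π_{E⊕F}|`: the operator norm of the projection onto `E` along `F`. -/
def projNorm [NormedAddCommGroup B] [NormedSpace ℝ B] (E F : Submodule ℝ B)
    (h : IsCompl E F) : ℝ :=
  projNormOn E F h (Metric.closedBall 0 1)

/-- `α(E, F) = inf { ‖e - f‖ : e ∈ E, ‖e‖ = 1, f ∈ F }`. -/
def alphaAngle [NormedAddCommGroup B] [NormedSpace ℝ B] (E F : Submodule ℝ B) : ℝ :=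
  sInf {r : ℝ | ∃ e ∈ E, ∃ f ∈ F, ‖e‖ = 1 ∧ r = ‖e - f‖}

/-- `ω_k`: the volume of the Euclidean unit ball in `ℝ^k`. -/
def euclideanBallVol (k : ℕ) : ENNReal :=
  volume (Metric.closedBall (0 : EuclideanSpace ℝ (Fin k)) 1)

/-- `μ` is the induced volume `m_E` on the `k`-dimensional subspace `E`: the (unique) Haar
measure on `E` assigning mass `ω_k` to the unit ball of `E`. -/
def IsInducedVolume [NormedAddCommGroup B] [NormedSpace ℝ B] [MeasurableSpace B]
    (E : Submodule ℝ B) (k : ℕ) (μ : Measure E) : Prop :=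
  Measure.IsAddHaarMeasure μ ∧ μ {v : E | ‖v‖ ≤ 1} = euclideanBallVol k

/-- `det(A|E)`, computed with respect to induced volumes `μE` on `E` and `μF` on a
subspace `F` containing `A(E)`: the ratio `μF(A(B_E)) / μE(B_E)` where `B_E` is
the unit ball of `E`. -/
def detIn [NormedAddCommGroup B] [NormedSpace ℝ B] [NormedAddCommGroup B'] [NormedSpace ℝ B']
    [MeasurableSpace B] [MeasurableSpace B']
    (A : B →L[ℝ] B') (E : Submodule ℝ B) (F : Submodule ℝ B')
    (μE : Measure E) (μF : Measure F) : ℝ :=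
  (μF {w : F | ∃ v : B, v ∈ E ∧ ‖v‖ ≤ 1 ∧ A v = (w : B')}).toReal /
    (μE {v : E | ‖v‖ ≤ 1}).toReal

/-- `P[v₁, …, v_k]`: the parallelepiped spanned by the vectors `v i`. -/
def pped [AddCommGroup B] [Module ℝ B] {k : ℕ} (v : Fin k → B) : Set B :=
  {x : B | ∃ a : Fin k → ℝ, (∀ i, a i ∈ Set.Icc (0 : ℝ) 1) ∧ x = ∑ i, a i • v i}

/-- `N[v₁, …, v_k]`: the sum of the norms of the projections, within the span of the `v i`,
onto each `⟨v i⟩` along the span of the other basis vectors. -/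
def Nquan [NormedAddCommGroup B] [NormedSpace ℝ B] {k : ℕ} (v : Fin k → B) : ℝ :=
  ∑ i, sSup {r : ℝ | ∃ a : Fin k → ℝ, ‖∑ j, a j • v j‖ ≤ 1 ∧ r = ‖a i • v i‖}

/-- The operator norm of the restriction of `A` to the subspace `E`. -/
def opNormOnSub [NormedAddCommGroup B] [NormedSpace ℝ B] [NormedAddCommGroup B']
    [NormedSpace ℝ B'] (A : B →L[ℝ] B') (E : Submodule ℝ B) : ℝ :=
  sSup {r : ℝ | ∃ v ∈ E, ‖v‖ ≤ 1 ∧ r = ‖A v‖}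

/-- The `n`-th iterate (`n ∈ ℤ`) of the invertible pair `(f, g)`, `g = f⁻¹`. -/
def zIter {X : Type*} (f g : X → X) (n : ℤ) (x : X) : X :=
  if 0 ≤ n then f^[n.toNat] x else g^[(-n).toNat] x

/-- `ψ'(x) = sup_{n ∈ ℤ} e^{-|n| δ} ψ(f^n x)`. -/
def psiSup {X : Type*} (f g : X → X) (ψ : X → ℝ) (δ : ℝ) (x : X) : ℝ :=
  sSup (Set.range fun n : ℤ => Real.exp (-|(n : ℝ)| * δ) * ψ (zIter f g n x))

/-- The cocycle `T^n_x = T_{f^{n-1} x} ∘ ⋯ ∘ T_x`. -/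
def cocycle {X : Type*} [NormedAddCommGroup B] [NormedSpace ℝ B]
    (f : X → X) (T : X → B →L[ℝ] B) : ℕ → X → B →L[ℝ] B
  | 0, _ => ContinuousLinearMap.id ℝ B
  | n + 1, x => (cocycle f T n (f x)).comp (T x)

end BY

end
noncomputable section
namespace S8aux

set_option maxHeartbeats 1000000
set_option synthInstance.maxHeartbeats 400000

open Pointwise

variable {B : Type*} [NormedAddCommGroup B] [NormedSpace ℝ B]
    [MeasurableSpace B] [BorelSpace B]

def Kset {k : ℕ} (v : Fin k → B) : Set (Fin k → ℝ) := {a | ‖∑ i, a i • v i‖ ≤ 1}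

omit [MeasurableSpace B] [BorelSpace B] in
lemma continuous_sum_smul {k : ℕ} (v : Fin k → B) :
    Continuous (fun a : Fin k → ℝ => ∑ i, a i • v i) :=
  continuous_finset_sum _ fun i _ => (continuous_apply i).smul continuous_const

omit [MeasurableSpace B] [BorelSpace B] in
lemma vol_Kset_pos {k : ℕ} (v : Fin k → B) : 0 < volume (Kset v) := by
  have hopen : IsOpen ((fun a : Fin k → ℝ => ∑ i, a i • v i) ⁻¹' Metric.ball 0 1) :=
    (Metric.isOpen_ball).preimage (continuous_sum_smul v)
  have hsub : ((fun a : Fin k → ℝ => ∑ i, a i • v i) ⁻¹' Metric.ball 0 1) ⊆ Kset v := by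
    intro a ha
    simp only [mem_preimage, Metric.mem_ball, dist_zero_right] at ha
    exact le_of_lt ha
  refine lt_of_lt_of_le ?_ (measure_mono hsub)
  refine hopen.measure_pos volume ⟨0, ?_⟩
  simp

omit [MeasurableSpace B] [BorelSpace B] in
lemma coord_bound {k : ℕ} (v : Fin k → B) (hv : LinearIndependent ℝ v)
    (hnorm : ∀ i, ‖v i‖ = 1) {Nbar : ℝ} (hNq : BY.Nquan v ≤ Nbar) :
    ∀ (a : Fin k → ℝ) (i : Fin k), |a i| ≤ Nbar * ‖∑ j, a j • v j‖ := by
  classical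
  set R : Fin k → Set ℝ := fun i =>
    {r : ℝ | ∃ a : Fin k → ℝ, ‖∑ j, a j • v j‖ ≤ 1 ∧ r = ‖a i • v i‖} with hR
  haveI : FiniteDimensional ℝ (span ℝ (range v)) :=
    FiniteDimensional.span_of_finite ℝ (finite_range v)
  have hbdd : ∀ i, BddAbove (R i) := by
    intro i
    let b : Basis (Fin k) ℝ (span ℝ (range v)) := Basis.span hv
    let φc : (span ℝ (range v)) →L[ℝ] ℝ := LinearMap.toContinuousLinearMap (b.coord i)
    refine ⟨‖φc‖, ?_⟩
    rintro r ⟨a, ha, rfl⟩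
    set x : span ℝ (range v) := ∑ j, a j • b j with hx
    have hxv : (x : B) = ∑ j, a j • v j := by
      rw [hx]
      push_cast
      exact Finset.sum_congr rfl fun j _ => by rw [Basis.span_apply]
    have hrepr : φc x = a i := by
      show (b.coord i) x = a i
      rw [Basis.coord_apply, hx, b.repr_sum_self]
    have hnx : ‖x‖ ≤ 1 := by
      rw [show ‖x‖ = ‖(x : B)‖ from rfl, hxv]; exact ha
    calc ‖a i • v i‖ = |a i| := by rw [norm_smul, hnorm i, mul_one, Real.norm_eq_abs]
      _ = ‖φc x‖ := by rw [hrepr, Real.norm_eq_abs]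
      _ ≤ ‖φc‖ := φc.unit_le_opNorm x hnx
  have hmem0 : ∀ i, (0 : ℝ) ∈ R i := fun i => ⟨0, by simp, by simp⟩
  have hsup_nonneg : ∀ i, 0 ≤ sSup (R i) := fun i => le_csSup (hbdd i) (hmem0 i)
  have hsup_le : ∀ i, sSup (R i) ≤ Nbar := by
    intro i
    calc sSup (R i) ≤ ∑ j, sSup (R j) :=
          Finset.single_le_sum (f := fun j => sSup (R j)) (fun j _ => hsup_nonneg j)
            (Finset.mem_univ i)
      _ ≤ Nbar := hNq
  intro a i
  set t := ‖∑ j, a j • v j‖ with ht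
  rcases eq_or_lt_of_le (norm_nonneg (∑ j, a j • v j)) with h0 | h0
  · have hz : ∑ j, a j • v j = 0 := by rw [← norm_eq_zero]; exact h0.symm
    have hai := (Fintype.linearIndependent_iff.mp hv) a hz i
    rw [hai, abs_zero, ht, ← h0, mul_zero]
  · have hsum : ∑ j, (t⁻¹ • a) j • v j = t⁻¹ • ∑ j, a j • v j := by
      rw [Finset.smul_sum]
      exact Finset.sum_congr rfl fun j _ => by simp [smul_smul]
    have hmem : |(t⁻¹ • a) i| ∈ R i := by
      refine ⟨t⁻¹ • a, ?_, ?_⟩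
      · rw [hsum, norm_smul, norm_inv, Real.norm_eq_abs, abs_of_pos h0, ← ht,
          inv_mul_cancel₀ (by rw [ht]; exact h0.ne')]
      · rw [norm_smul, hnorm i, mul_one, Real.norm_eq_abs]
    have h1 : |(t⁻¹ • a) i| ≤ Nbar := le_trans (le_csSup (hbdd i) hmem) (hsup_le i)
    have h2 : |(t⁻¹ • a) i| = t⁻¹ * |a i| := by
      rw [Pi.smul_apply, smul_eq_mul, abs_mul, abs_of_pos (inv_pos.mpr h0)]
    rw [h2] at h1
    have htpos : 0 < t := h0
    calc |a i| = t * (t⁻¹ * |a i|) := by field_simp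
      _ ≤ t * Nbar := mul_le_mul_of_nonneg_left h1 htpos.le
      _ = Nbar * t := mul_comm _ _

omit [MeasurableSpace B] [BorelSpace B] in
lemma vol_Kset_lt_top {k : ℕ} (v : Fin k → B) {Nbar : ℝ} (hN0 : 0 ≤ Nbar)
    (hb : ∀ (a : Fin k → ℝ) (i : Fin k), |a i| ≤ Nbar * ‖∑ j, a j • v j‖) :
    volume (Kset v) < ⊤ := by
  have hsub : Kset v ⊆ Set.Icc (fun _ : Fin k => -Nbar) (fun _ => Nbar) := by
    intro a ha
    rw [Set.mem_Icc]
    have key : ∀ i, |a i| ≤ Nbar := by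
      intro i
      have h1 := hb a i
      have h2 : Nbar * ‖∑ j, a j • v j‖ ≤ Nbar * 1 := mul_le_mul_of_nonneg_left ha hN0
      linarith
    constructor <;> intro i <;>
    · have := abs_le.mp (key i)
      first
        | exact this.1
        | exact this.2
  calc volume (Kset v) ≤ volume (Set.Icc (fun _ : Fin k => -Nbar) (fun _ => Nbar)) :=
        measure_mono hsub
    _ = ∏ _i : Fin k, ENNReal.ofReal (Nbar - -Nbar) := Real.volume_Icc_pi
    _ < ⊤ := by
        refine ENNReal.prod_lt_top fun i _ => ?_
        exact ENNReal.ofReal_lt_top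

omit [MeasurableSpace B] [BorelSpace B] in
lemma Kset_subset_smul {k : ℕ} (v w : Fin k → B) {Nbar c : ℝ}
    (hb : ∀ (a : Fin k → ℝ) (i : Fin k), |a i| ≤ Nbar * ‖∑ j, a j • v j‖)
    (hc : c = 1 + Nbar * ∑ i, ‖v i - w i‖) (hN0 : 0 ≤ Nbar)
    (hs0 : 0 ≤ ∑ i, ‖v i - w i‖) :
    Kset v ⊆ c • Kset w := by
  have hcpos : 0 < c := by rw [hc]; positivity
  intro a ha
  have haK : ‖∑ i, a i • v i‖ ≤ 1 := ha
  have hbound : ‖∑ i, a i • w i‖ ≤ c := by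
    have hdecomp : ∑ i, a i • w i = (∑ i, a i • v i) + ∑ i, a i • (w i - v i) := by
      rw [← Finset.sum_add_distrib]
      refine Finset.sum_congr rfl fun i _ => ?_
      rw [smul_sub]
      abel
    have hterm : ∀ i, ‖a i • (w i - v i)‖ ≤ Nbar * ‖v i - w i‖ := by
      intro i
      rw [norm_smul, Real.norm_eq_abs]
      have h1 : |a i| ≤ Nbar := le_trans (hb a i)
        (by nlinarith [norm_nonneg (∑ j, a j • v j)])
      have h2 : ‖w i - v i‖ = ‖v i - w i‖ := norm_sub_rev _ _
      rw [h2]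
      exact mul_le_mul_of_nonneg_right h1 (norm_nonneg _)
    calc ‖∑ i, a i • w i‖ ≤ ‖∑ i, a i • v i‖ + ‖∑ i, a i • (w i - v i)‖ := by
          rw [hdecomp]; exact norm_add_le _ _
      _ ≤ 1 + ∑ i, ‖a i • (w i - v i)‖ :=
          add_le_add haK (norm_sum_le _ _)
      _ ≤ 1 + ∑ i, Nbar * ‖v i - w i‖ :=
          add_le_add (le_refl 1) (Finset.sum_le_sum fun i _ => hterm i)
      _ = c := by rw [hc, Finset.mul_sum]
  rw [Set.mem_smul_set]
  refine ⟨c⁻¹ • a, ?_, by simp [smul_smul, mul_inv_cancel₀ hcpos.ne']⟩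
  show ‖∑ i, (c⁻¹ • a) i • w i‖ ≤ 1
  have hsum : ∑ i, (c⁻¹ • a) i • w i = c⁻¹ • ∑ i, a i • w i := by
    rw [Finset.smul_sum]
    exact Finset.sum_congr rfl fun i _ => by simp [smul_smul]
  rw [hsum, norm_smul, norm_inv, Real.norm_eq_abs, abs_of_pos hcpos]
  rw [inv_mul_le_iff₀ hcpos, mul_one]
  exact hbound

omit [MeasurableSpace B] [BorelSpace B] in
lemma vol_le_of_subset_smul {k : ℕ} {c : ℝ} (hc0 : 0 ≤ c) {S T : Set (Fin k → ℝ)}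
    (h : S ⊆ c • T) : volume S ≤ ENNReal.ofReal (c ^ k) * volume T := by
  calc volume S ≤ volume (c • T) := measure_mono h
    _ = ENNReal.ofReal (c ^ k) * volume T := by
        have := MeasureTheory.Measure.addHaar_smul (volume : Measure (Fin k → ℝ)) c T
        rwa [finrank_fin_fun, abs_of_nonneg (pow_nonneg hc0 k)] at this

lemma measure_pped {k : ℕ} (v : Fin k → B) (hv : LinearIndependent ℝ v)
    (μV : Measure (span ℝ (Set.range v)))
    (hHaar : μV.IsAddHaarMeasure)
    (hBall : μV {x : span ℝ (Set.range v) | ‖x‖ ≤ 1} = BY.euclideanBallVol k)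
    (hK0 : volume (Kset v) ≠ 0) (hKtop : volume (Kset v) ≠ ⊤) :
    μV (Subtype.val ⁻¹' BY.pped v) = BY.euclideanBallVol k / volume (Kset v) := by
  classical
  haveI : FiniteDimensional ℝ (span ℝ (Set.range v)) :=
    FiniteDimensional.span_of_finite ℝ (finite_range v)
  haveI := hHaar
  let b : Basis (Fin k) ℝ (span ℝ (Set.range v)) := Basis.span hv
  let e : (span ℝ (Set.range v)) ≃L[ℝ] (Fin k → ℝ) :=
    b.equivFun.toContinuousLinearEquiv
  have h1 : ∀ x : span ℝ (Set.range v), (x : B) = ∑ i, e x i • v i := by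
    intro x
    conv_lhs => rw [← b.sum_equivFun x]
    push_cast
    exact Finset.sum_congr rfl fun j _ => by rw [Basis.span_apply]; rfl
  have hinj : Function.Injective (Subtype.val : span ℝ (Set.range v) → B) :=
    Subtype.val_injective
  have h2 : ∀ a : Fin k → ℝ, ((e.symm a : span ℝ (Set.range v)) : B) = ∑ i, a i • v i := by
    intro a
    rw [h1 (e.symm a)]
    simp
  set ν : Measure (Fin k → ℝ) := Measure.map e μV with hν
  haveI : ν.IsAddHaarMeasure := e.isAddHaarMeasure_map μV
  have hcube : e ⁻¹' (Set.Icc (0 : Fin k → ℝ) 1) = Subtype.val ⁻¹' BY.pped v := by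
    ext x
    simp only [mem_preimage, Set.mem_Icc, BY.pped, mem_setOf_eq]
    constructor
    · rintro ⟨hl, hr⟩
      exact ⟨e x, fun i => ⟨by exact hl i, by exact hr i⟩, h1 x⟩
    · rintro ⟨a, ha, hxa⟩
      have hxa' : x = e.symm a := hinj (by rw [hxa, h2 a])
      subst hxa'
      simp only [ContinuousLinearEquiv.apply_symm_apply]
      exact ⟨fun i => (ha i).1, fun i => (ha i).2⟩
  have hKeq : e ⁻¹' (Kset v) = {x : span ℝ (Set.range v) | ‖x‖ ≤ 1} := by
    ext x
    simp only [mem_preimage, Kset, mem_setOf_eq]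
    rw [← h1 x]
    rfl
  have hme : Measurable e := e.continuous.measurable
  have hνcube : ν (Set.Icc 0 1) = μV (Subtype.val ⁻¹' BY.pped v) := by
    rw [hν, Measure.map_apply hme measurableSet_Icc, hcube]
  have hKmeas : MeasurableSet (Kset v) :=
    (isClosed_le ((continuous_sum_smul v).norm) continuous_const).measurableSet
  have hνK : ν (Kset v) = BY.euclideanBallVol k := by
    rw [hν, Measure.map_apply hme hKmeas, hKeq, hBall]
  have huniq := Measure.isAddLeftInvariant_eq_smul ν (volume : Measure (Fin k → ℝ))
  set c : NNReal := ν.addHaarScalarFactor (volume : Measure (Fin k → ℝ)) with hc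
  have hcK : (c : ENNReal) * volume (Kset v) = BY.euclideanBallVol k := by
    rw [← hνK]
    conv_rhs => rw [huniq]
    rw [Measure.smul_apply, ENNReal.smul_def, smul_eq_mul]
  have hccube : μV (Subtype.val ⁻¹' BY.pped v) = (c : ENNReal) := by
    rw [← hνcube]
    conv_lhs => rw [huniq]
    rw [Measure.smul_apply, Real.volume_Icc_pi]
    simp [ENNReal.smul_def]
  rw [hccube, ← hcK]
  rw [mul_div_assoc, ENNReal.div_self hK0 hKtop, mul_one]

lemma euclideanBallVol_pos (k : ℕ) : 0 < BY.euclideanBallVol k := by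
  refine lt_of_lt_of_le (Metric.measure_ball_pos volume 0 one_pos) (measure_mono ?_)
  exact Metric.ball_subset_closedBall

lemma euclideanBallVol_lt_top (k : ℕ) : BY.euclideanBallVol k < ⊤ :=
  (isCompact_closedBall _ _).measure_lt_top

end S8aux
end

/-- Proposition 2.11 of the paper. For any `k ≥ 1` and `N̄ > k`, there
exist `L = L(N̄, k) > 0` and `δ = δ(N̄, k) > 0` such that: if `{vᵢ}, {wᵢ}` are two sets of
`k` linearly independent unit vectors with `maxᵢ |vᵢ - wᵢ| ≤ δ`, `N[v₁,…,v_k] ≤ N̄` and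
`N[w₁,…,w_k] ≤ N̄`, then
`|log (m_{⟨vᵢ⟩} P[v₁,…,v_k] / m_{⟨wᵢ⟩} P[w₁,…,w_k])| ≤ L Σᵢ |vᵢ - wᵢ|`. -/
theorem statement8 {B : Type*} [NormedAddCommGroup B] [NormedSpace ℝ B] [CompleteSpace B]
    [MeasurableSpace B] [BorelSpace B]
    (k : ℕ) (hk : 1 ≤ k) (Nbar : ℝ) (hN : (k : ℝ) < Nbar) :
    ∃ L > (0 : ℝ), ∃ δ > (0 : ℝ),
      ∀ v w : Fin k → B,
        LinearIndependent ℝ v → LinearIndependent ℝ w →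
        (∀ i, ‖v i‖ = 1) → (∀ i, ‖w i‖ = 1) →
        (∀ i, ‖v i - w i‖ ≤ δ) →
        BY.Nquan v ≤ Nbar → BY.Nquan w ≤ Nbar →
        ∀ (μV : MeasureTheory.Measure (Submodule.span ℝ (Set.range v)))
          (μW : MeasureTheory.Measure (Submodule.span ℝ (Set.range w))),
          BY.IsInducedVolume (Submodule.span ℝ (Set.range v)) k μV →
          BY.IsInducedVolume (Submodule.span ℝ (Set.range w)) k μW →
          |Real.log ((μV (Subtype.val ⁻¹' BY.pped v)).toReal /
              (μW (Subtype.val ⁻¹' BY.pped w)).toReal)| ≤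
            L * ∑ i, ‖v i - w i‖ := by
  classical
  have hk0 : (0:ℝ) < (k : ℝ) := by exact_mod_cast Nat.pos_of_ne_zero (by omega)
  have hNbar0 : (0:ℝ) < Nbar := lt_trans hk0 hN
  refine ⟨(k : ℝ) * Nbar, by positivity, 1, one_pos, ?_⟩
  intro v w hv hw hnv hnw _hδ hNv hNw μV μW hμV hμW
  set s := ∑ i, ‖v i - w i‖ with hs
  have hs0 : 0 ≤ s := Finset.sum_nonneg fun i _ => norm_nonneg _
  set c := 1 + Nbar * s with hc
  have hcpos : 0 < c := by rw [hc]; positivity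
  have hc1 : 1 ≤ c := by nlinarith
  have hbv := S8aux.coord_bound v hv hnv hNv
  have hbw := S8aux.coord_bound w hw hnw hNw
  have hKv_pos := S8aux.vol_Kset_pos v
  have hKw_pos := S8aux.vol_Kset_pos w
  have hKv_top := S8aux.vol_Kset_lt_top v hNbar0.le hbv
  have hKw_top := S8aux.vol_Kset_lt_top w hNbar0.le hbw
  have hμVP := S8aux.measure_pped v hv μV hμV.1 hμV.2 hKv_pos.ne' hKv_top.ne
  have hμWP := S8aux.measure_pped w hw μW hμW.1 hμW.2 hKw_pos.ne' hKw_top.ne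
  set Rv := (volume (S8aux.Kset v)).toReal with hRvdef
  set Rw := (volume (S8aux.Kset w)).toReal with hRwdef
  have hRv : 0 < Rv := ENNReal.toReal_pos hKv_pos.ne' hKv_top.ne
  have hRw : 0 < Rw := ENNReal.toReal_pos hKw_pos.ne' hKw_top.ne
  have hω : 0 < (BY.euclideanBallVol k).toReal :=
    ENNReal.toReal_pos (S8aux.euclideanBallVol_pos k).ne' (S8aux.euclideanBallVol_lt_top k).ne
  have harg : (μV (Subtype.val ⁻¹' BY.pped v)).toReal /
      (μW (Subtype.val ⁻¹' BY.pped w)).toReal = Rw / Rv := by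
    rw [hμVP, hμWP, ENNReal.toReal_div, ENNReal.toReal_div, div_div_div_comm,
      div_self hω.ne', one_div, inv_div]
  have hsub1 := S8aux.Kset_subset_smul v w hbv hc hNbar0.le hs0
  have hc' : c = 1 + Nbar * ∑ i, ‖w i - v i‖ := by
    rw [hc, hs]
    congr 2
    exact Finset.sum_congr rfl fun i _ => norm_sub_rev _ _
  have hs0' : 0 ≤ ∑ i, ‖w i - v i‖ := Finset.sum_nonneg fun i _ => norm_nonneg _
  have hsub2 := S8aux.Kset_subset_smul w v hbw hc' hNbar0.le hs0'
  have hvol1 : volume (S8aux.Kset v) ≤ ENNReal.ofReal (c ^ k) * volume (S8aux.Kset w) :=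
    S8aux.vol_le_of_subset_smul hcpos.le hsub1
  have hvol2 : volume (S8aux.Kset w) ≤ ENNReal.ofReal (c ^ k) * volume (S8aux.Kset v) :=
    S8aux.vol_le_of_subset_smul hcpos.le hsub2
  have hfin1 : ENNReal.ofReal (c ^ k) * volume (S8aux.Kset w) ≠ ⊤ :=
    ENNReal.mul_ne_top ENNReal.ofReal_ne_top hKw_top.ne
  have hfin2 : ENNReal.ofReal (c ^ k) * volume (S8aux.Kset v) ≠ ⊤ :=
    ENNReal.mul_ne_top ENNReal.ofReal_ne_top hKv_top.ne
  have h1 : Rv ≤ c ^ k * Rw := by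
    have := ENNReal.toReal_mono hfin1 hvol1
    rwa [ENNReal.toReal_mul, ENNReal.toReal_ofReal (by positivity : (0:ℝ) ≤ c ^ k)] at this
  have h2 : Rw ≤ c ^ k * Rv := by
    have := ENNReal.toReal_mono hfin2 hvol2
    rwa [ENNReal.toReal_mul, ENNReal.toReal_ofReal (by positivity : (0:ℝ) ≤ c ^ k)] at this
  have hlog1 : Real.log Rv ≤ (k : ℝ) * Real.log c + Real.log Rw := by
    calc Real.log Rv ≤ Real.log (c ^ k * Rw) := Real.log_le_log hRv h1
      _ = Real.log (c ^ k) + Real.log Rw := Real.log_mul (pow_pos hcpos k).ne' hRw.ne'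
      _ = (k : ℝ) * Real.log c + Real.log Rw := by rw [Real.log_pow]
  have hlog2 : Real.log Rw ≤ (k : ℝ) * Real.log c + Real.log Rv := by
    calc Real.log Rw ≤ Real.log (c ^ k * Rv) := Real.log_le_log hRw h2
      _ = Real.log (c ^ k) + Real.log Rv := Real.log_mul (pow_pos hcpos k).ne' hRv.ne'
      _ = (k : ℝ) * Real.log c + Real.log Rv := by rw [Real.log_pow]
  have habs : |Real.log (Rw / Rv)| ≤ (k : ℝ) * Real.log c := by
    rw [Real.log_div hRw.ne' hRv.ne', abs_le]
    constructor <;> linarith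
  have hlogc : Real.log c ≤ Nbar * s := by
    have := Real.log_le_sub_one_of_pos hcpos
    rw [hc] at this ⊢
    linarith
  rw [harg]
  calc |Real.log (Rw / Rv)| ≤ (k : ℝ) * Real.log c := habs
    _ ≤ (k : ℝ) * (Nbar * s) := mul_le_mul_of_nonneg_left hlogc hk0.le
    _ = (k : ℝ) * Nbar * s := by ring
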